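/- Let f_i(w) = ‖w − w_i*‖ for points w_1*, …, w_n* ∈ ℝ^d, f(w) = (1/n)Σ_i ‖w − w_i*‖, w̄* = (1/n)Σ_i w_i*, and w* a minimizer of f. Define D = max(2‖w̄* − w*‖, (4/n)Σ_i ‖w̄* − w_i*‖). Then for every w with ‖w − w*‖ ≥ D, f(w) − f(w*) ≥ (1/4)‖w − w*‖. -/

import Mathlib

/-- Sharpness of the average-distance function far from its minimizer. -/
theorem geometric_median_sharpness {d n : ℕ} (hn : 0 < n)
    (ws : Fin n → EuclideanSpace ℝ (Fin d))
    (f : EuclideanSpace ℝ (Fin d) → ℝ)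
    (hf : f = fun w => (1 / n : ℝ) * ∑ i, ‖w - ws i‖)
    (wstar : EuclideanSpace ℝ (Fin d)) (hmin : ∀ w, f wstar ≤ f w)
    (wbar : EuclideanSpace ℝ (Fin d)) (hbar : wbar = (1 / n : ℝ) • ∑ i, ws i)
    (D : ℝ)
    (hD : D = max (2 * ‖wbar - wstar‖) ((4 / n : ℝ) * ∑ i, ‖wbar - ws i‖)) :
    ∀ w, D ≤ ‖w - wstar‖ → (1 / 4 : ℝ) * ‖w - wstar‖ ≤ f w - f wstar := by
  intro w hw
  have hn' : (n : ℝ) ≠ 0 := Nat.cast_ne_zero.mpr hn.ne'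
  have hnpos : (0:ℝ) < n := Nat.cast_pos.mpr hn
  -- f v ≥ ‖v - wbar‖
  have hkey : ∀ v : EuclideanSpace ℝ (Fin d), ‖v - wbar‖ ≤ f v := by
    intro v
    have h1 : v - wbar = (1/n : ℝ) • ∑ i, (v - ws i) := by
      rw [hbar, Finset.sum_sub_distrib, smul_sub, Finset.sum_const, Finset.card_univ,
        Fintype.card_fin, ← Nat.cast_smul_eq_nsmul ℝ, smul_smul]
      rw [one_div, inv_mul_cancel₀ hn', one_smul]
    have h2 : ‖v - wbar‖ ≤ (1/n : ℝ) * ∑ i, ‖v - ws i‖ := by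
      rw [h1, norm_smul]
      have := norm_sum_le (Finset.univ : Finset (Fin n)) (fun i => v - ws i)
      have h3 : ‖(1/n : ℝ)‖ = (1/n : ℝ) := by
        rw [Real.norm_eq_abs, abs_of_pos (by positivity)]
      rw [h3]
      exact mul_le_mul_of_nonneg_left this (by positivity)
    simpa [hf] using h2
  -- f wstar ≤ f wbar ≤ D/4
  have hfw : f wstar ≤ D / 4 := by
    have h1 : f wstar ≤ f wbar := hmin wbar
    have h2 : f wbar = (1/n : ℝ) * ∑ i, ‖wbar - ws i‖ := by rw [hf]
    have h3 : (4 / n : ℝ) * ∑ i, ‖wbar - ws i‖ ≤ D := by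
      rw [hD]; exact le_max_right _ _
    have h4 : (1/n : ℝ) * ∑ i, ‖wbar - ws i‖ = (4 / n * ∑ i, ‖wbar - ws i‖) / 4 := by ring
    have : (1/n : ℝ) * ∑ i, ‖wbar - ws i‖ ≤ D / 4 := by rw [h4]; linarith
    linarith [h1, h2 ▸ this]
  -- ‖wbar - wstar‖ ≤ D/2
  have hbw : ‖wbar - wstar‖ ≤ D / 2 := by
    have : 2 * ‖wbar - wstar‖ ≤ D := by rw [hD]; exact le_max_left _ _
    linarith
  -- triangle: ‖w - wstar‖ ≤ ‖w - wbar‖ + ‖wbar - wstar‖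
  have htri : ‖w - wstar‖ ≤ ‖w - wbar‖ + ‖wbar - wstar‖ :=
    norm_sub_le_norm_sub_add_norm_sub w wbar wstar
  have hfwb := hkey w
  linarith
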